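/- Fix real numbers α, β with 1/2 < α < β < 1. Then there exist constants C₁ > 0 and C₂ > 0 such that for every s = σ + iτ ∈ ℂ with α ≤ σ ≤ β and every u ∈ (0,1]: (i) |H_s(u)| ≤ C₁·u^{−σ}; (ii) the function u ↦ H_s(u) is differentiable at u and |d/du H_s(u)| ≤ C₂·(1+|τ|)·u^{−σ−1}. -/

import Mathlib

/-- The kernel `H_s(u) = ∑_{k ≥ 0} (k+u)^{-s} (k+1+u)^{-s}`. -/
noncomputable def Hs (s : ℂ) (u : ℝ) : ℂ :=
  ∑' k : ℕ, (((k : ℝ) + u : ℝ) : ℂ) ^ (-s) * (((k : ℝ) + 1 + u : ℝ) : ℂ) ^ (-s)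

namespace Stmt7Aux

/-- The `k`-th term of the series defining `Hs`. -/
noncomputable def f (s : ℂ) (k : ℕ) (u : ℝ) : ℂ :=
  (((k : ℝ) + u : ℝ) : ℂ) ^ (-s) * (((k : ℝ) + 1 + u : ℝ) : ℂ) ^ (-s)

/-- The derivative of the `k`-th term. -/
noncomputable def f' (s : ℂ) (k : ℕ) (u : ℝ) : ℂ :=
  (-s * (((k : ℝ) + u : ℝ) : ℂ) ^ (-s - 1)) * (((k : ℝ) + 1 + u : ℝ) : ℂ) ^ (-s)
  + (((k : ℝ) + u : ℝ) : ℂ) ^ (-s) * (-s * (((k : ℝ) + 1 + u : ℝ) : ℂ) ^ (-s - 1))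

lemma hasDerivAt_f (s : ℂ) (k : ℕ) {x : ℝ} (hx : 0 < x) :
    HasDerivAt (f s k) (f' s k x) x := by
  have hk : (0:ℝ) ≤ (k:ℝ) := Nat.cast_nonneg k
  have h1c : HasDerivAt (fun z : ℂ => (((k:ℝ):ℂ) + z) ^ (-s))
      (-s * (((k:ℝ):ℂ) + (x:ℂ)) ^ (-s - 1) * 1) (x : ℂ) := by
    refine ((hasDerivAt_id ((x:ℝ):ℂ)).const_add ((k:ℝ):ℂ)).cpow_const ?_
    rw [Complex.mem_slitPlane_iff]
    left
    simp only [id_eq, Complex.add_re, Complex.ofReal_re]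
    positivity
  have h2c : HasDerivAt (fun z : ℂ => ((((k:ℝ):ℂ) + 1) + z) ^ (-s))
      (-s * ((((k:ℝ):ℂ) + 1) + (x:ℂ)) ^ (-s - 1) * 1) (x : ℂ) := by
    refine ((hasDerivAt_id ((x:ℝ):ℂ)).const_add (((k:ℝ):ℂ) + 1)).cpow_const ?_
    rw [Complex.mem_slitPlane_iff]
    left
    simp only [id_eq, Complex.add_re, Complex.one_re, Complex.ofReal_re]
    positivity
  have h1 : HasDerivAt (fun y : ℝ => (((k : ℝ) + y : ℝ) : ℂ) ^ (-s))
      (-s * (((k : ℝ) + x : ℝ) : ℂ) ^ (-s - 1)) x := by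
    have := h1c.comp_ofReal
    simp only [mul_one] at this
    convert this using 2 with y
    · push_cast; ring_nf
    · push_cast; ring_nf
  have h2 : HasDerivAt (fun y : ℝ => (((k : ℝ) + 1 + y : ℝ) : ℂ) ^ (-s))
      (-s * (((k : ℝ) + 1 + x : ℝ) : ℂ) ^ (-s - 1)) x := by
    have := h2c.comp_ofReal
    simp only [mul_one] at this
    convert this using 2 with y
    · push_cast; ring_nf
    · push_cast; ring_nf
  exact h1.mul h2

lemma abs_f (s : ℂ) (k : ℕ) {x : ℝ} (hx : 0 < x) :
    ‖f s k x‖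
      = ((k:ℝ) + x) ^ (-s.re) * ((k:ℝ) + 1 + x) ^ (-s.re) := by
  have hk : (0:ℝ) ≤ (k:ℝ) := Nat.cast_nonneg k
  have h1 : (0:ℝ) < (k:ℝ) + x := by positivity
  have h2 : (0:ℝ) < (k:ℝ) + 1 + x := by positivity
  simp only [f, norm_mul]
  rw [Complex.norm_cpow_eq_rpow_re_of_pos h1, Complex.norm_cpow_eq_rpow_re_of_pos h2,
    Complex.neg_re]

/-- crude bound for the derivative term, valid for all positive `x`. -/
lemma abs_f'_le (s : ℂ) (hσ : 0 < s.re) (k : ℕ) {x : ℝ} (hx : 0 < x) :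
    ‖f' s k x‖ ≤ ‖s‖ * (2 * ((k:ℝ) + x) ^ (-s.re - 1)) := by
  have hk : (0:ℝ) ≤ (k:ℝ) := Nat.cast_nonneg k
  have ha : (0:ℝ) < (k:ℝ) + x := by positivity
  have hb : (0:ℝ) < (k:ℝ) + 1 + x := by positivity
  have hb1 : (1:ℝ) ≤ (k:ℝ) + 1 + x := by linarith
  have hre : (-s - 1).re = -s.re - 1 := by simp
  have habs1 : ‖(((k:ℝ) + x : ℝ):ℂ) ^ (-s - 1)‖ = ((k:ℝ)+x) ^ (-s.re - 1) := by
    rw [Complex.norm_cpow_eq_rpow_re_of_pos ha, hre]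
  have habs2 : ‖(((k:ℝ) + 1 + x : ℝ):ℂ) ^ (-s - 1)‖ = ((k:ℝ)+1+x) ^ (-s.re - 1) := by
    rw [Complex.norm_cpow_eq_rpow_re_of_pos hb, hre]
  have habs3 : ‖(((k:ℝ) + x : ℝ):ℂ) ^ (-s)‖ = ((k:ℝ)+x) ^ (-s.re) := by
    rw [Complex.norm_cpow_eq_rpow_re_of_pos ha, Complex.neg_re]
  have habs4 : ‖(((k:ℝ) + 1 + x : ℝ):ℂ) ^ (-s)‖ = ((k:ℝ)+1+x) ^ (-s.re) := by
    rw [Complex.norm_cpow_eq_rpow_re_of_pos hb, Complex.neg_re]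
  have hb_le_one : ((k:ℝ)+1+x) ^ (-s.re) ≤ 1 :=
    Real.rpow_le_one_of_one_le_of_nonpos hb1 (by linarith)
  -- first summand
  have hA : ‖(-s * (((k : ℝ) + x : ℝ) : ℂ) ^ (-s - 1)) *
        (((k : ℝ) + 1 + x : ℝ) : ℂ) ^ (-s)‖ ≤ ‖s‖ * ((k:ℝ)+x) ^ (-s.re - 1) := by
    rw [norm_mul, norm_mul, norm_neg, habs1, habs4]
    have h1 : (0:ℝ) ≤ ((k:ℝ)+x) ^ (-s.re - 1) := Real.rpow_nonneg ha.le _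
    calc ‖s‖ * ((k:ℝ)+x) ^ (-s.re - 1) * ((k:ℝ)+1+x) ^ (-s.re)
        ≤ ‖s‖ * ((k:ℝ)+x) ^ (-s.re - 1) * 1 := by
          apply mul_le_mul_of_nonneg_left hb_le_one; positivity
      _ = ‖s‖ * ((k:ℝ)+x) ^ (-s.re - 1) := by ring
  -- second summand
  have hB : ‖(((k : ℝ) + x : ℝ) : ℂ) ^ (-s) *
        (-s * (((k : ℝ) + 1 + x : ℝ) : ℂ) ^ (-s - 1))‖ ≤
        ‖s‖ * ((k:ℝ)+x) ^ (-s.re - 1) := by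
    rw [norm_mul, norm_mul, norm_neg, habs3, habs2]
    have key : ((k:ℝ)+x) ^ (-s.re) * ((k:ℝ)+1+x) ^ (-s.re - 1) ≤ ((k:ℝ)+x) ^ (-s.re - 1) := by
      have e1 : ((k:ℝ)+1+x) ^ (-s.re - 1) = ((k:ℝ)+1+x) ^ (-s.re) * ((k:ℝ)+1+x) ^ (-1:ℝ) := by
        rw [← Real.rpow_add hb]; ring_nf
      have e2 : ((k:ℝ)+x) ^ (-s.re - 1) = ((k:ℝ)+x) ^ (-s.re) * ((k:ℝ)+x) ^ (-1:ℝ) := by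
        rw [← Real.rpow_add ha]; ring_nf
      have h3 : ((k:ℝ)+1+x) ^ (-1:ℝ) ≤ ((k:ℝ)+x) ^ (-1:ℝ) :=
        Real.rpow_le_rpow_of_nonpos ha (by linarith) (by norm_num)
      rw [e1, e2]
      have h4 : (0:ℝ) ≤ ((k:ℝ)+x) ^ (-s.re) := Real.rpow_nonneg ha.le _
      have h5 : (0:ℝ) ≤ ((k:ℝ)+1+x) ^ (-1:ℝ) := Real.rpow_nonneg hb.le _
      calc ((k:ℝ)+x) ^ (-s.re) * (((k:ℝ)+1+x) ^ (-s.re) * ((k:ℝ)+1+x) ^ (-1:ℝ))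
          ≤ ((k:ℝ)+x) ^ (-s.re) * (1 * ((k:ℝ)+x) ^ (-1:ℝ)) := by
            apply mul_le_mul_of_nonneg_left _ h4
            apply mul_le_mul hb_le_one h3 h5 (by norm_num)
        _ = ((k:ℝ)+x) ^ (-s.re) * ((k:ℝ)+x) ^ (-1:ℝ) := by ring
    calc ((k:ℝ)+x) ^ (-s.re) * (‖s‖ * ((k:ℝ)+1+x) ^ (-s.re - 1))
        = ‖s‖ * (((k:ℝ)+x) ^ (-s.re) * ((k:ℝ)+1+x) ^ (-s.re - 1)) := by ring
      _ ≤ ‖s‖ * ((k:ℝ)+x) ^ (-s.re - 1) := by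
          apply mul_le_mul_of_nonneg_left key (norm_nonneg s)
  calc ‖f' s k x‖ ≤ _ + _ := norm_add_le _ _
    _ ≤ ‖s‖ * ((k:ℝ)+x) ^ (-s.re - 1) + ‖s‖ * ((k:ℝ)+x) ^ (-s.re - 1) :=
        add_le_add hA hB
    _ = ‖s‖ * (2 * ((k:ℝ) + x) ^ (-s.re - 1)) := by ring

lemma bound_f (α : ℝ) (hα : 1/2 < α) {s : ℂ} (hσα : α ≤ s.re) {u : ℝ}
    (hu0 : 0 < u) (hu1 : u ≤ 1) (k : ℕ) :
    ‖f s k u‖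
      ≤ u ^ (-s.re) * ((k:ℝ) ^ (-(2*α)) + if k = 0 then 1 else 0) := by
  have hσ0 : 0 < s.re := by linarith
  rw [abs_f s k hu0]
  have hu_ge : (1:ℝ) ≤ u ^ (-s.re) :=
    Real.one_le_rpow_of_pos_of_le_one_of_nonpos hu0 hu1 (by linarith)
  have hu_nonneg : (0:ℝ) ≤ u ^ (-s.re) := by linarith
  rcases k with _ | k
  · simp only [Nat.cast_zero, zero_add, if_pos, Real.zero_rpow (by nlinarith : -(2*α) ≠ 0)]
    have h1 : (1 + u) ^ (-s.re) ≤ 1 :=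
      Real.rpow_le_one_of_one_le_of_nonpos (by linarith) (by linarith)
    have h2 : (0:ℝ) ≤ (1 + u) ^ (-s.re) := Real.rpow_nonneg (by linarith) _
    nlinarith
  · simp only [Nat.cast_add, Nat.cast_one, if_neg (Nat.succ_ne_zero k)]
    have hm1 : (1:ℝ) ≤ (k:ℝ) + 1 := by
      have : (0:ℝ) ≤ (k:ℝ) := Nat.cast_nonneg k
      linarith
    have hm0 : (0:ℝ) < (k:ℝ) + 1 := by positivity
    have h1 : ((k:ℝ) + 1 + u) ^ (-s.re) ≤ ((k:ℝ)+1) ^ (-s.re) :=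
      Real.rpow_le_rpow_of_nonpos hm0 (by linarith) (by linarith)
    have h2 : ((k:ℝ) + 1 + 1 + u) ^ (-s.re) ≤ ((k:ℝ)+1) ^ (-s.re) :=
      Real.rpow_le_rpow_of_nonpos hm0 (by linarith) (by linarith)
    have h3 : ((k:ℝ)+1) ^ (-s.re) * ((k:ℝ)+1) ^ (-s.re) = ((k:ℝ)+1) ^ (-(2*s.re)) := by
      rw [← Real.rpow_add hm0]; ring_nf
    have h4 : ((k:ℝ)+1) ^ (-(2*s.re)) ≤ ((k:ℝ)+1) ^ (-(2*α)) :=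
      Real.rpow_le_rpow_of_exponent_le hm1 (by linarith)
    have h5 : (0:ℝ) ≤ ((k:ℝ)+1) ^ (-s.re) := Real.rpow_nonneg hm0.le _
    have h6 : (0:ℝ) ≤ ((k:ℝ) + 1 + 1 + u) ^ (-s.re) := Real.rpow_nonneg (by linarith) _
    have h7 : (0:ℝ) ≤ ((k:ℝ)+1) ^ (-(2*α)) := Real.rpow_nonneg hm0.le _
    calc ((k:ℝ) + 1 + u) ^ (-s.re) * ((k:ℝ) + 1 + 1 + u) ^ (-s.re)
        ≤ ((k:ℝ)+1) ^ (-s.re) * ((k:ℝ)+1) ^ (-s.re) := mul_le_mul h1 h2 h6 h5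
      _ = ((k:ℝ)+1) ^ (-(2*s.re)) := h3
      _ ≤ ((k:ℝ)+1) ^ (-(2*α)) := h4
      _ = 1 * (((k:ℝ)+1) ^ (-(2*α)) + 0) := by ring
      _ ≤ u ^ (-s.re) * (((k:ℝ)+1) ^ (-(2*α)) + 0) := by
          apply mul_le_mul_of_nonneg_right hu_ge (by linarith)

lemma bound_f' (α : ℝ) (hα : 1/2 < α) (hα1 : α < 1) {s : ℂ} (hσα : α ≤ s.re) {u : ℝ}
    (hu0 : 0 < u) (hu1 : u ≤ 1) (k : ℕ) :
    ‖f' s k u‖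
      ≤ (‖s‖ * 2) * (u ^ (-s.re - 1) * ((k:ℝ) ^ (-(2*α)) + if k = 0 then 1 else 0)) := by
  have hσ0 : 0 < s.re := by linarith
  have hcrude := abs_f'_le s hσ0 k hu0
  have hu_ge : (1:ℝ) ≤ u ^ (-s.re - 1) :=
    Real.one_le_rpow_of_pos_of_le_one_of_nonpos hu0 hu1 (by linarith)
  have hs0 : (0:ℝ) ≤ ‖s‖ := norm_nonneg s
  rcases k with _ | k
  · simp only [Nat.cast_zero, zero_add, if_pos,
      Real.zero_rpow (by nlinarith : -(2*α) ≠ 0)] at hcrude ⊢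
    calc ‖f' s 0 u‖ ≤ ‖s‖ * (2 * u ^ (-s.re - 1)) := hcrude
      _ = ‖s‖ * 2 * (u ^ (-s.re - 1) * 1) := by ring
  · simp only [Nat.cast_add, Nat.cast_one, if_neg (Nat.succ_ne_zero k)] at hcrude ⊢
    have hm1 : (1:ℝ) ≤ (k:ℝ) + 1 := by
      have : (0:ℝ) ≤ (k:ℝ) := Nat.cast_nonneg k
      linarith
    have hm0 : (0:ℝ) < (k:ℝ) + 1 := by positivity
    have h1 : ((k:ℝ) + 1 + u) ^ (-s.re - 1) ≤ ((k:ℝ)+1) ^ (-s.re - 1) :=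
      Real.rpow_le_rpow_of_nonpos hm0 (by linarith) (by linarith)
    have h2 : ((k:ℝ)+1) ^ (-s.re - 1) ≤ ((k:ℝ)+1) ^ (-(2*α)) :=
      Real.rpow_le_rpow_of_exponent_le hm1 (by linarith)
    have h7 : (0:ℝ) ≤ ((k:ℝ)+1) ^ (-(2*α)) := Real.rpow_nonneg hm0.le _
    calc ‖f' s (k+1) u‖ ≤ ‖s‖ * (2 * ((k:ℝ) + 1 + u) ^ (-s.re - 1)) := hcrude
      _ ≤ ‖s‖ * (2 * ((k:ℝ)+1) ^ (-(2*α))) := by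
          apply mul_le_mul_of_nonneg_left _ hs0
          have := h1.trans h2
          linarith
      _ = ‖s‖ * 2 * (1 * (((k:ℝ)+1) ^ (-(2*α)) + 0)) := by ring
      _ ≤ ‖s‖ * 2 * (u ^ (-s.re - 1) * (((k:ℝ)+1) ^ (-(2*α)) + 0)) := by
          apply mul_le_mul_of_nonneg_left _ (by positivity)
          apply mul_le_mul_of_nonneg_right hu_ge (by linarith)

/-- Uniform bound on derivative terms on `Ioi (u/2)`. -/
lemma bound_f'_Ioi (α : ℝ) (hα : 1/2 < α) (hα1 : α < 1) {s : ℂ} (hσα : α ≤ s.re) {u : ℝ}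
    (hu0 : 0 < u) (hu1 : u ≤ 1) (k : ℕ) {x : ℝ} (hx : x ∈ Set.Ioi (u/2)) :
    ‖f' s k x‖
      ≤ (‖s‖ * 2 * (u/2) ^ (-s.re - 1)) * ((k:ℝ)+1) ^ (-(2*α)) := by
  have hσ0 : 0 < s.re := by linarith
  have hu2 : (0:ℝ) < u/2 := by linarith
  have hxpos : (0:ℝ) < x := lt_trans hu2 hx
  have hk : (0:ℝ) ≤ (k:ℝ) := Nat.cast_nonneg k
  have hcrude := abs_f'_le s hσ0 k hxpos
  have hs0 : (0:ℝ) ≤ ‖s‖ := norm_nonneg s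
  have key : ((k:ℝ) + x) ^ (-s.re - 1) ≤ (u/2) ^ (-s.re - 1) * ((k:ℝ)+1) ^ (-(2*α)) := by
    have h1 : ((k:ℝ) + x) ^ (-s.re - 1) ≤ ((k:ℝ) + u/2) ^ (-s.re - 1) :=
      Real.rpow_le_rpow_of_nonpos (by positivity) (by linarith [Set.mem_Ioi.mp hx]) (by linarith)
    have h2 : ((k:ℝ) + u/2) ^ (-s.re - 1) ≤ ((u/2) * ((k:ℝ)+1)) ^ (-s.re - 1) := by
      apply Real.rpow_le_rpow_of_nonpos (by positivity) _ (by linarith)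
      have : u/2 * (k:ℝ) ≤ (k:ℝ) := by nlinarith
      nlinarith
    have h3 : ((u/2) * ((k:ℝ)+1)) ^ (-s.re - 1)
        = (u/2) ^ (-s.re - 1) * ((k:ℝ)+1) ^ (-s.re - 1) :=
      Real.mul_rpow hu2.le (by positivity)
    have hk1 : (1:ℝ) ≤ (k:ℝ) + 1 := by linarith
    have h4 : ((k:ℝ)+1) ^ (-s.re - 1) ≤ ((k:ℝ)+1) ^ (-(2*α)) :=
      Real.rpow_le_rpow_of_exponent_le hk1 (by linarith)
    have h5 : (0:ℝ) ≤ (u/2) ^ (-s.re - 1) := Real.rpow_nonneg hu2.le _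
    calc ((k:ℝ) + x) ^ (-s.re - 1) ≤ ((k:ℝ) + u/2) ^ (-s.re - 1) := h1
      _ ≤ (u/2) ^ (-s.re - 1) * ((k:ℝ)+1) ^ (-s.re - 1) := by rw [← h3]; exact h2
      _ ≤ (u/2) ^ (-s.re - 1) * ((k:ℝ)+1) ^ (-(2*α)) :=
          mul_le_mul_of_nonneg_left h4 h5
  calc ‖f' s k x‖ ≤ ‖s‖ * (2 * ((k:ℝ) + x) ^ (-s.re - 1)) := hcrude
    _ ≤ ‖s‖ * (2 * ((u/2) ^ (-s.re - 1) * ((k:ℝ)+1) ^ (-(2*α)))) := by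
        apply mul_le_mul_of_nonneg_left _ hs0
        linarith
    _ = (‖s‖ * 2 * (u/2) ^ (-s.re - 1)) * ((k:ℝ)+1) ^ (-(2*α)) := by ring

end Stmt7Aux

theorem stmt7 (α β : ℝ) (hα : 1 / 2 < α) (hαβ : α < β) (hβ : β < 1) :
    ∃ C₁ > (0 : ℝ), ∃ C₂ > (0 : ℝ),
      ∀ s : ℂ, α ≤ s.re → s.re ≤ β → ∀ u : ℝ, u ∈ Set.Ioc (0 : ℝ) 1 →
        ‖Hs s u‖ ≤ C₁ * u ^ (-s.re) ∧
        ∃ D : ℂ, HasDerivAt (fun v : ℝ => Hs s v) D u ∧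
          ‖D‖ ≤ C₂ * (1 + |s.im|) * u ^ (-s.re - 1) := by
  have hZ0 : Summable (fun k : ℕ => (k:ℝ) ^ (-(2*α))) :=
    Real.summable_nat_rpow.mpr (by linarith)
  have hZ1 : Summable (fun k : ℕ => ((k:ℝ)+1) ^ (-(2*α))) := by
    have := (summable_nat_add_iff 1).mpr hZ0
    simpa using this
  have hite : Summable (fun k : ℕ => if k = 0 then (1:ℝ) else 0) := by
    apply summable_of_ne_finset_zero (s := {0})
    intro b hb
    simp only [Finset.mem_singleton] at hb
    simp [hb]
  set Z : ℝ := ∑' k : ℕ, (k:ℝ) ^ (-(2*α)) with hZdef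
  have hZnn : 0 ≤ Z := tsum_nonneg fun k => Real.rpow_nonneg (Nat.cast_nonneg k) _
  refine ⟨1 + Z, by linarith, 2 * (1 + Z), by linarith, ?_⟩
  intro s hσα hσβ u hu
  obtain ⟨hu0, hu1⟩ := hu
  have hσ0 : 0 < s.re := by linarith
  have hg_sum : Summable (fun k : ℕ => (k:ℝ) ^ (-(2*α)) + if k = 0 then (1:ℝ) else 0) :=
    hZ0.add hite
  have hg_tsum : ∑' k : ℕ, ((k:ℝ) ^ (-(2*α)) + if k = 0 then (1:ℝ) else 0) = Z + 1 := by
    rw [hZ0.tsum_add hite, tsum_ite_eq]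
  have hb_sum : Summable (fun k : ℕ =>
      u ^ (-s.re) * ((k:ℝ) ^ (-(2*α)) + if k = 0 then (1:ℝ) else 0)) :=
    hg_sum.mul_left _
  have hnorm_sum : Summable (fun k : ℕ => ‖Stmt7Aux.f s k u‖) :=
    Summable.of_nonneg_of_le (fun k => norm_nonneg _)
      (fun k => Stmt7Aux.bound_f α hα hσα hu0 hu1 k) hb_sum
  have hf_sum : Summable (fun k : ℕ => Stmt7Aux.f s k u) := by
    apply Summable.of_norm
    simpa using hnorm_sum
  constructor
  · -- bound on Hs itself
    have h1 : ‖Hs s u‖ ≤ ∑' k : ℕ, ‖Stmt7Aux.f s k u‖ := by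
      have := norm_tsum_le_tsum_norm (f := fun k : ℕ => Stmt7Aux.f s k u)
        (by simpa using hnorm_sum)
      simpa [Hs, Stmt7Aux.f] using this
    have h2 : ∑' k : ℕ, ‖Stmt7Aux.f s k u‖
        ≤ ∑' k : ℕ, u ^ (-s.re) * ((k:ℝ) ^ (-(2*α)) + if k = 0 then (1:ℝ) else 0) :=
      Summable.tsum_le_tsum (fun k => Stmt7Aux.bound_f α hα hσα hu0 hu1 k) hnorm_sum hb_sum
    have h3 : ∑' k : ℕ, u ^ (-s.re) * ((k:ℝ) ^ (-(2*α)) + if k = 0 then (1:ℝ) else 0)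
        = u ^ (-s.re) * (Z + 1) := by
      rw [tsum_mul_left, hg_tsum]
    have : ‖Hs s u‖ ≤ u ^ (-s.re) * (Z + 1) := by
      rw [← h3]; exact h1.trans h2
    calc ‖Hs s u‖ ≤ u ^ (-s.re) * (Z + 1) := this
      _ = (1 + Z) * u ^ (-s.re) := by ring
  · -- derivative
    have hα1 : α < 1 := by linarith
    have hv_sum : Summable (fun k : ℕ =>
        (‖s‖ * 2 * (u/2) ^ (-s.re - 1)) * ((k:ℝ)+1) ^ (-(2*α))) :=
      hZ1.mul_left _
    have hder : HasDerivAt (fun z : ℝ => ∑' k : ℕ, Stmt7Aux.f s k z)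
        (∑' k : ℕ, Stmt7Aux.f' s k u) u := by
      refine hasDerivAt_tsum_of_isPreconnected (t := Set.Ioi (u/2)) hv_sum isOpen_Ioi isPreconnected_Ioi
        (fun k y hy => Stmt7Aux.hasDerivAt_f s k (lt_trans (by linarith) hy))
        (fun k y hy => ?_) (Set.mem_Ioi.mpr (by linarith)) hf_sum (Set.mem_Ioi.mpr (by linarith))
      simpa using
        Stmt7Aux.bound_f'_Ioi α hα hα1 hσα hu0 hu1 k hy
    refine ⟨∑' k : ℕ, Stmt7Aux.f' s k u, ?_, ?_⟩
    · have : (fun v : ℝ => Hs s v) = fun z : ℝ => ∑' k : ℕ, Stmt7Aux.f s k z := by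
        funext v
        simp only [Hs, Stmt7Aux.f]
      rw [this]
      exact hder
    · -- bound on the derivative
      have hc_sum : Summable (fun k : ℕ => (‖s‖ * 2) *
          (u ^ (-s.re - 1) * ((k:ℝ) ^ (-(2*α)) + if k = 0 then (1:ℝ) else 0))) :=
        (hg_sum.mul_left _).mul_left _
      have hd_norm_sum : Summable (fun k : ℕ => ‖Stmt7Aux.f' s k u‖) :=
        Summable.of_nonneg_of_le (fun k => norm_nonneg _)
          (fun k => Stmt7Aux.bound_f' α hα hα1 hσα hu0 hu1 k) hc_sum
      have hDle : ‖∑' k : ℕ, Stmt7Aux.f' s k u‖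
          ≤ ∑' k : ℕ, ‖Stmt7Aux.f' s k u‖ := by
        have := norm_tsum_le_tsum_norm (f := fun k : ℕ => Stmt7Aux.f' s k u)
          (by simpa using hd_norm_sum)
        simpa using this
      have h2' : ∑' k : ℕ, ‖Stmt7Aux.f' s k u‖
          ≤ ∑' k : ℕ, (‖s‖ * 2) *
            (u ^ (-s.re - 1) * ((k:ℝ) ^ (-(2*α)) + if k = 0 then (1:ℝ) else 0)) :=
        Summable.tsum_le_tsum (fun k => Stmt7Aux.bound_f' α hα hα1 hσα hu0 hu1 k) hd_norm_sum hc_sum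
      have h3' : ∑' k : ℕ, (‖s‖ * 2) *
            (u ^ (-s.re - 1) * ((k:ℝ) ^ (-(2*α)) + if k = 0 then (1:ℝ) else 0))
          = (‖s‖ * 2) * (u ^ (-s.re - 1) * (Z + 1)) := by
        rw [tsum_mul_left, tsum_mul_left, hg_tsum]
      have habs_s : ‖s‖ ≤ 1 + |s.im| := by
        have h1 := Complex.norm_le_abs_re_add_abs_im s
        have h2 : |s.re| ≤ 1 := abs_le.mpr ⟨by linarith, by linarith⟩
        linarith
      have hx0 : (0:ℝ) ≤ u ^ (-s.re - 1) := Real.rpow_nonneg hu0.le _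
      have hT0 : (0:ℝ) ≤ 1 + |s.im| := by positivity
      have hfinal : ‖∑' k : ℕ, Stmt7Aux.f' s k u‖
          ≤ (‖s‖ * 2) * (u ^ (-s.re - 1) * (Z + 1)) := by
        rw [← h3']; exact hDle.trans h2'
      calc ‖∑' k : ℕ, Stmt7Aux.f' s k u‖
          ≤ (‖s‖ * 2) * (u ^ (-s.re - 1) * (Z + 1)) := hfinal
        _ ≤ ((1 + |s.im|) * 2) * (u ^ (-s.re - 1) * (Z + 1)) := by
            apply mul_le_mul_of_nonneg_right _ (by positivity)
            linarith
        _ = 2 * (1 + Z) * (1 + |s.im|) * u ^ (-s.re - 1) := by ring
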